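/- arXiv:1909.01216 — 3 statements merged into one kernel-verified Lean document; each statement's English description precedes it below -/
import Mathlib

section
/- Roll-up functions compose: if ℓ → ℓ' → ℓ'' are consecutive (or transitively related) levels in a hierarchy H of a sound dimension instance, then for every element a of dom(D.ℓ), ρ_{ℓ→ℓ''}(a) = ρ_{ℓ'→ℓ''}(ρ_{ℓ→ℓ'}(a)). -/
private lemma rollup_mono {α : Type} {edge : α → α → Prop} {level : α → ℕ}
    (hstep : ∀ a b, edge a b → level b = level a + 1) :
    ∀ {u v : α}, Relation.TransGen edge u v → level u < level v := by
  intro u v h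
  induction h with
  | single h => rw [hstep _ _ h]; omega
  | tail _ h ih => exact lt_trans ih (by rw [hstep _ _ h]; omega)

private lemma rollup_uniq {α : Type} {edge : α → α → Prop} {level : α → ℕ} {top : ℕ}
    (hstep : ∀ a b, edge a b → level b = level a + 1)
    (hbound : ∀ a, level a ≤ top)
    (hsound : ∀ a, level a < top → ∃! b, edge a b) :
    ∀ {x y : α}, Relation.TransGen edge x y →
      ∀ z, Relation.TransGen edge x z → level z = level y → z = y := by
  have hfun : ∀ a b b', edge a b → edge a b' → b = b' := by
    intro a b b' h h'
    have ha : level a < top := by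
      have := hbound b; have := hstep _ _ h; omega
    obtain ⟨w, _, hw⟩ := hsound a ha
    rw [hw b h, hw b' h']
  intro x y h
  induction h using Relation.TransGen.head_induction_on with
  | single h =>
    intro z hz hl
    obtain ⟨u, hxu, huz⟩ := Relation.TransGen.head'_iff.mp hz
    rcases Relation.reflTransGen_iff_eq_or_transGen.mp huz with rfl | huz
    · exact hfun _ _ _ hxu h
    · exfalso
      have := rollup_mono hstep huz
      have := hstep _ _ hxu
      have := hstep _ _ h
      have := hstep _ _ hxu
      omega
  | head h1 h2 ih =>
    intro z hz hl
    obtain ⟨u, hxu, huz⟩ := Relation.TransGen.head'_iff.mp hz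
    rcases Relation.reflTransGen_iff_eq_or_transGen.mp huz with rfl | huz
    · exfalso
      have := rollup_mono hstep h2
      have := hstep _ _ h1
      have := hstep _ _ hxu
      omega
    · have : u = _ := hfun _ _ _ hxu h1
      subst this
      exact ih z huz hl

/-- Roll-up functions compose: in a sound dimension instance
(levels indexed by naturals, edges from each level to the next, unique parent
below the top), if `a` rolls up to `b` at level `ℓ'` and `b` rolls up to `c`
at level `ℓ''`, then `c` is exactly the (unique) element at level `ℓ''` to
which `a` rolls up; i.e. `ρ_{ℓ→ℓ''}(a) = ρ_{ℓ'→ℓ''}(ρ_{ℓ→ℓ'}(a))`. -/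
theorem rollup_composes {α : Type} (edge : α → α → Prop)
    (level : α → ℕ) (top : ℕ)
    (hstep : ∀ a b, edge a b → level b = level a + 1)
    (hbound : ∀ a, level a ≤ top)
    (hsound : ∀ a, level a < top → ∃! b, edge a b) :
    ∀ (a b c : α) (ℓ' ℓ'' : ℕ),
      Relation.TransGen edge a b → level b = ℓ' →
      Relation.TransGen edge b c → level c = ℓ'' →
      (Relation.TransGen edge a c ∧
        ∀ c', Relation.TransGen edge a c' → level c' = ℓ'' → c' = c) := by
  intro a b c ℓ' ℓ'' hab hb hbc hc
  have hac := hab.trans hbc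
  exact ⟨hac, fun c' h hl => rollup_uniq hstep hbound hsound hac c' h (by omega)⟩
end

section
/- The classical cube Roll-Up operation is simulated by graphoid operations on the star-graphoid: for any data cube C over dimensions D_1,...,D_d with a single measure μ and aggregate function F, and any level ℓ_c of dimension D_c, the star-graphoid of the rolled-up cube Roll-Up(C, D_c.ℓ_c; μ, F) equals (up to identifier choice) the graphoid Aggr(Minimize(Climb(Star(C), #D_c, D_c.(Bottom→ℓ_c))), #e_μ, μ, F). -/
open scoped Classical

/-- The star-representation of a data cube: an (identifier-free) graphoid
whose hyperedges have an empty source set; each edge is recorded by its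
target node set (a set of (dimension, value) nodes) together with its measure
label. -/
structure StarGraphoid (ι V M : Type) where
  edges : Multiset (Finset (ι × V) × M)

variable {ι V M : Type} [Fintype ι] [Fintype V] [DecidableEq ι] [DecidableEq V]

/-- The target node set of the star hyperedge of a cell with coordinates `a`:
one node `(i, a i)` per dimension `i`. -/
noncomputable def targetSet (a : ι → V) : Finset (ι × V) :=
  Finset.univ.image (fun i => (i, a i))

/-- The star-graphoid `Star(C)` of a data cube `C` (a partial function from
coordinates to measure values): one hyperedge per cell of the cube. -/
noncomputable def StarOf (C : (ι → V) → Option M) : StarGraphoid ι V M :=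
  ⟨(Finset.univ : Finset (ι → V)).val.filterMap
    (fun a => (C a).map (fun m => (targetSet a, m)))⟩

/-- Climb the dimension `c` from Bottom to the level given by the roll-up
function `ρ`, in all nodes of type `#D_c`; since nodes of the star-graphoid
are identified by their (dimension, value) labels, nodes with equal climbed
labels are identified, so this also performs the minimization. -/
noncomputable def ClimbStar (G : StarGraphoid ι V M) (c : ι) (ρ : V → V) :
    StarGraphoid ι V M :=
  ⟨G.edges.map (fun e =>
    (e.1.image (fun p => (p.1, if p.1 = c then ρ p.2 else p.2)), e.2))⟩

/-- Aggregate: replace all parallel hyperedges with identical target sets by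
a single hyperedge whose measure is `F` of the multiset of their measures. -/
noncomputable def AggrStar (G : StarGraphoid ι V M) (F : Multiset M → M) :
    StarGraphoid ι V M :=
  ⟨((G.edges.map Prod.fst).toFinset.val).map (fun S =>
    (S, F ((G.edges.filter (fun e => e.1 = S)).map Prod.snd)))⟩

/-- The classical cube roll-up `Roll-Up(C, D_c.ℓ_c; μ, F)`: cells whose
`D_c`-coordinates roll up (via `ρ`) to the same value and agree on all other
coordinates are replaced by a single cell with the aggregated measure. -/
noncomputable def RollUpCube (C : (ι → V) → Option M) (c : ι) (ρ : V → V)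
    (F : Multiset M → M) : (ι → V) → Option M := fun a' =>
  let grp : Multiset M :=
    (Finset.univ : Finset (ι → V)).val.filterMap
      (fun a => if (∀ i, i ≠ c → a i = a' i) ∧ ρ (a c) = a' c then C a else none)
  if grp = 0 then none else some (F grp)


section Aux

variable {ι V M : Type} [Fintype ι] [Fintype V] [DecidableEq ι] [DecidableEq V]

/-- `targetSet` is injective. -/
lemma targetSet_injective : Function.Injective (targetSet (ι := ι) (V := V)) := by
  intro a b h
  funext i
  have hi : (i, a i) ∈ targetSet b := by
    rw [← h]; simp [targetSet]
  simp only [targetSet, Finset.mem_image, Finset.mem_univ, true_and] at hi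
  obtain ⟨j, hj⟩ := hi
  have hji : j = i := congrArg Prod.fst hj
  subst hji
  exact (congrArg Prod.snd hj).symm

/-- The roll-up of coordinates: dimension `c` climbed via `ρ`. -/
noncomputable def rollFn (c : ι) (ρ : V → V) (a : ι → V) : ι → V :=
  fun i => if i = c then ρ (a i) else a i

lemma rollFn_eq_iff {c : ι} {ρ : V → V} {a a' : ι → V} :
    rollFn c ρ a = a' ↔ (∀ i, i ≠ c → a i = a' i) ∧ ρ (a c) = a' c := by
  constructor
  · rintro rfl
    refine ⟨fun i hi => ?_, ?_⟩ <;> simp [rollFn, *]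
  · rintro ⟨h1, h2⟩
    funext i
    by_cases hi : i = c
    · subst hi; simp [rollFn, h2]
    · simp [rollFn, hi, h1 i hi]

lemma climb_targetSet (c : ι) (ρ : V → V) (a : ι → V) :
    (targetSet a).image (fun p => (p.1, if p.1 = c then ρ p.2 else p.2))
      = targetSet (rollFn c ρ a) := by
  simp only [targetSet, Finset.image_image, rollFn]
  rfl

lemma filterMap_filter_map_snd {α β γ : Type*} (f : α → Option (β × γ))
    (p : β × γ → Prop) [DecidablePred p] (s : Multiset α) :
    ((s.filterMap f).filter p).map Prod.snd
      = s.filterMap (fun a => (f a).bind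
          (fun e => if p e then some e.2 else none)) := by
  induction s using Multiset.induction with
  | empty => simp
  | cons a s ih =>
    cases h : f a with
    | none =>
      rw [Multiset.filterMap_cons_none a s h,
        Multiset.filterMap_cons_none a s (by simp [h]), ih]
    | some e =>
      rw [Multiset.filterMap_cons_some f a s h]
      by_cases hp : p e
      · rw [Multiset.filter_cons_of_pos _ hp, Multiset.map_cons,
          Multiset.filterMap_cons_some _ a s
            (show _ = some e.2 by simp [h, hp]), ih]
      · rw [Multiset.filter_cons_of_neg _ hp,
          Multiset.filterMap_cons_none a s (by simp [h, hp]), ih]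

end Aux

/-- The classical cube Roll-Up is simulated by the graphoid
operations on the star-graphoid:
`Star(Roll-Up(C, D_c.ℓ_c; μ, F)) = Aggr(Minimize(Climb(Star(C), #D_c, ρ)), #e_μ, μ, F)`
(identifier-free, i.e. up to identifier choice). -/
theorem cube_rollup_simulated (C : (ι → V) → Option M) (c : ι) (ρ : V → V)
    (F : Multiset M → M) :
    StarOf (RollUpCube C c ρ F) = AggrStar (ClimbStar (StarOf C) c ρ) F := by
  have hE : (ClimbStar (StarOf C) c ρ).edges
      = (Finset.univ : Finset (ι → V)).val.filterMap
          (fun a => (C a).map (fun m => (targetSet (rollFn c ρ a), m))) := by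
    simp only [ClimbStar, StarOf, Multiset.map_filterMap]
    congr 1
    funext a
    cases h : C a with
    | none => simp [h]
    | some m => simp [h, climb_targetSet]
  -- the group multiset of a rolled-up cell `a'`
  set grp : (ι → V) → Multiset M := fun a' =>
    (Finset.univ : Finset (ι → V)).val.filterMap
      (fun a => if (∀ i, i ≠ c → a i = a' i) ∧ ρ (a c) = a' c then C a else none)
    with hgrpdef
  have hRU : ∀ a', RollUpCube C c ρ F a'
      = if grp a' = 0 then none else some (F (grp a')) := fun a' => rfl
  have hgrp : ∀ a' : ι → V,
      (((ClimbStar (StarOf C) c ρ).edges.filter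
          (fun e => e.1 = targetSet a')).map Prod.snd) = grp a' := by
    intro a'
    rw [hE, filterMap_filter_map_snd]
    simp only [hgrpdef]
    congr 1
    funext a
    cases h : C a with
    | none => simp [h]
    | some m =>
      by_cases hr : rollFn c ρ a = a'
      · rw [if_pos (rollFn_eq_iff.mp hr)]
        simp [h, hr]
      · rw [if_neg (fun hc => hr (rollFn_eq_iff.mpr hc))]
        simp only [Option.map_some, Option.bind_some]
        rw [if_neg (show ¬((targetSet (rollFn c ρ a), m).1 = targetSet a') from
          fun hc => hr (targetSet_injective hc))]
  -- membership characterizations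
  have hmem : ∀ a' : ι → V, grp a' ≠ 0 ↔
      ∃ a m0, ((∀ i, i ≠ c → a i = a' i) ∧ ρ (a c) = a' c) ∧ C a = some m0 := by
    intro a'
    constructor
    · intro h
      obtain ⟨m0, hm0⟩ := Multiset.exists_mem_of_ne_zero h
      rw [hgrpdef] at hm0
      simp only [Multiset.mem_filterMap, Finset.mem_val, Finset.mem_univ,
        true_and] at hm0
      obtain ⟨a, ha⟩ := hm0
      by_cases hc : (∀ i, i ≠ c → a i = a' i) ∧ ρ (a c) = a' c
      · exact ⟨a, m0, hc, by rwa [if_pos hc] at ha⟩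
      · rw [if_neg hc] at ha; exact absurd ha (by simp)
    · rintro ⟨a, m0, hc, hCa⟩
      intro h0
      have : m0 ∈ grp a' := by
        rw [hgrpdef]
        simp only [Multiset.mem_filterMap, Finset.mem_val, Finset.mem_univ,
          true_and]
        exact ⟨a, by rw [if_pos hc, hCa]⟩
      rw [h0] at this
      exact absurd this (Multiset.notMem_zero m0)
  -- Now prove equality of the edge multisets.
  rcases hS : StarOf (RollUpCube C c ρ F) with ⟨L⟩
  rcases hA : AggrStar (ClimbStar (StarOf C) c ρ) F with ⟨R⟩
  have hL : L = (Finset.univ : Finset (ι → V)).val.filterMap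
      (fun a' => (RollUpCube C c ρ F a').map (fun m => (targetSet a', m))) := by
    have := congrArg StarGraphoid.edges hS
    simpa [StarOf] using this.symm
  have hR : R = (((ClimbStar (StarOf C) c ρ).edges.map Prod.fst).toFinset.val).map
      (fun S => (S, F (((ClimbStar (StarOf C) c ρ).edges.filter
        (fun e => e.1 = S)).map Prod.snd))) := by
    have := congrArg StarGraphoid.edges hA
    simpa [AggrStar] using this.symm
  congr 1
  have hLnd : L.Nodup := by
    rw [hL]
    refine Multiset.Nodup.filterMap _ ?_ (Finset.univ.nodup)
    intro a b x hx hy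
    rw [Option.mem_def, Option.map_eq_some_iff] at hx hy
    obtain ⟨m1, _, h1⟩ := hx
    obtain ⟨m2, _, h2⟩ := hy
    have : targetSet a = targetSet b := by
      have e1 : x.1 = targetSet a := by rw [← h1]
      have e2 : x.1 = targetSet b := by rw [← h2]
      rw [← e1, e2]
    exact targetSet_injective this
  have hRnd : R.Nodup := by
    rw [hR]
    refine Multiset.Nodup.map ?_ (Finset.nodup _)
    intro S1 S2 h
    exact congrArg Prod.fst h
  rw [hLnd.ext hRnd]
  rintro ⟨S, m⟩
  rw [hL, hR]
  simp only [Multiset.mem_filterMap, Multiset.mem_map, Finset.mem_val,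
    Finset.mem_univ, true_and, Option.map_eq_some_iff, Multiset.mem_toFinset,
    Multiset.mem_map]
  constructor
  · rintro ⟨a', m0, hru, heq⟩
    rw [hRU] at hru
    by_cases h0 : grp a' = 0
    · rw [if_pos h0] at hru; exact absurd hru (by simp)
    rw [if_neg h0] at hru
    obtain ⟨a, m1, hc, hCa⟩ := (hmem a').mp h0
    refine ⟨targetSet a', ⟨⟨(targetSet a', m1), ?_, rfl⟩, ?_⟩⟩
    · rw [hE]
      simp only [Multiset.mem_filterMap, Finset.mem_val, Finset.mem_univ,
        true_and]
      refine ⟨a, ?_⟩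
      rw [hCa, Option.map_some, rollFn_eq_iff.mpr hc]
    · rw [hgrp a']
      have hm0 : m0 = F (grp a') := by injection hru.symm
      rw [← hm0]
      exact heq
  · rintro ⟨S', ⟨⟨e, heE, heS⟩, hpair⟩⟩
    rw [hE] at heE
    simp only [Multiset.mem_filterMap, Finset.mem_val, Finset.mem_univ,
      true_and, Option.map_eq_some_iff] at heE
    obtain ⟨a, m1, hCa, hee⟩ := heE
    set a' := rollFn c ρ a with ha'
    have hS' : S' = targetSet a' := by rw [← heS, ← hee]
    have h0 : grp a' ≠ 0 := (hmem a').mpr ⟨a, m1, rollFn_eq_iff.mp rfl, hCa⟩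
    refine ⟨a', F (grp a'), ?_, ?_⟩
    · rw [hRU, if_neg h0]
    · have := hpair
      rw [hS', hgrp a'] at this
      exact this
end

section
/- The classical cube Slice operation is simulated by graphoid operations: for a data cube C with measure μ and aggregate function F, the star-graphoid of Slice(C, D_s; μ, F) equals n-Delete(Roll-Up(Star(C), #D_s, D_s.(Bottom→All); #e_μ, μ, F), #D_s). -/
open scoped Classical

variable {ι V M : Type} [Fintype ι] [Fintype V] [DecidableEq ι] [DecidableEq V]

/-- `n-Delete`: remove all nodes of type `#D_s` (those whose first component
is `s`) from the source and target sets of every hyperedge, keeping edge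
labels. -/
noncomputable def nDeleteStar (G : StarGraphoid ι V M) (s : ι) :
    StarGraphoid ι V M :=
  ⟨G.edges.map (fun e => (e.1.filter (fun p => p.1 ≠ s), e.2))⟩

/-- The star-graphoid of a cube over the remaining dimensions `{i // i ≠ s}`
(after slicing out dimension `s`). -/
noncomputable def StarSub (s : ι)
    (C' : ({i : ι // i ≠ s} → V) → Option M) : StarGraphoid ι V M :=
  ⟨(Finset.univ : Finset ({i : ι // i ≠ s} → V)).val.filterMap
    (fun a => (C' a).map (fun m =>
      (Finset.univ.image (fun i : {i : ι // i ≠ s} => ((i : ι), a i)), m)))⟩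

/-- The classical cube Slice: drop dimension `s`, merging cells that agree on
all other coordinates and aggregating their measures with `F`. -/
noncomputable def SliceCube (C : (ι → V) → Option M) (s : ι)
    (F : Multiset M → M) : ({i : ι // i ≠ s} → V) → Option M := fun a' =>
  let grp : Multiset M :=
    (Finset.univ : Finset (ι → V)).val.filterMap
      (fun a => if ∀ i : {i : ι // i ≠ s}, a (i : ι) = a' i then C a else none)
  if grp = 0 then none else some (F grp)

noncomputable def restr (s : ι) (a : ι → V) : {i : ι // i ≠ s} → V := fun i => a i

noncomputable def climbSet (s : ι) (allv : V) (a : ι → V) : Finset (ι × V) :=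
  Finset.univ.image (fun i => (i, if i = s then allv else a i))

noncomputable def subSet (s : ι) (a' : {i : ι // i ≠ s} → V) : Finset (ι × V) :=
  Finset.univ.image (fun i : {i : ι // i ≠ s} => ((i : ι), a' i))

lemma mem_climbSet {s : ι} {allv : V} {a : ι → V} {j : ι} {v : V} :
    (j, v) ∈ climbSet s allv a ↔ v = if j = s then allv else a j := by
  simp only [climbSet, Finset.mem_image, Finset.mem_univ, true_and, Prod.mk.injEq]
  constructor
  · rintro ⟨i, rfl, rfl⟩; rfl
  · rintro rfl; exact ⟨j, rfl, rfl⟩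

lemma climbSet_eq_iff {s : ι} {allv : V} {a b : ι → V} :
    climbSet s allv a = climbSet s allv b ↔ restr s a = restr s b := by
  constructor
  · intro h
    funext i
    have hmem : ((i : ι), a (i : ι)) ∈ climbSet s allv b := by
      rw [← h, mem_climbSet]; simp [i.2]
    rw [mem_climbSet] at hmem
    simpa [i.2, restr] using hmem
  · intro h
    unfold climbSet
    congr 1
    funext i
    by_cases hi : i = s
    · simp [hi]
    · have := congrFun h ⟨i, hi⟩
      simp only [restr] at this
      simp [hi, this]

lemma climbSet_filter {s : ι} {allv : V} {a : ι → V} :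
    (climbSet s allv a).filter (fun p => p.1 ≠ s) = subSet s (restr s a) := by
  ext ⟨j, v⟩
  simp only [Finset.mem_filter, mem_climbSet, subSet, Finset.mem_image, Finset.mem_univ,
    true_and, Prod.mk.injEq]
  constructor
  · rintro ⟨hv, hj⟩
    refine ⟨⟨j, hj⟩, rfl, ?_⟩
    rw [if_neg hj] at hv
    exact hv.symm
  · rintro ⟨i, rfl, rfl⟩
    exact ⟨by rw [if_neg i.2]; rfl, i.2⟩

lemma subSet_inj {s : ι} {a' b' : {i : ι // i ≠ s} → V} (h : subSet s a' = subSet s b') :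
    a' = b' := by
  funext i
  have hmem : ((i : ι), a' i) ∈ subSet s b' := by
    rw [← h]; exact Finset.mem_image_of_mem _ (Finset.mem_univ i)
  simp only [subSet, Finset.mem_image, Finset.mem_univ, true_and, Prod.mk.injEq] at hmem
  obtain ⟨j, hj1, hj2⟩ := hmem
  have hji : j = i := Subtype.ext hj1
  subst hji
  exact hj2.symm

/-- The classical cube Slice is simulated by graphoid
operations: `Star(Slice(C, D_s; μ, F))` equals
`n-Delete(Roll-Up(Star(C), #D_s, D_s.(Bottom→All); #e_μ, μ, F), #D_s)`, where
the graphoid Roll-Up is `Aggr ∘ Minimize ∘ Climb` and climbing `D_s` to the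
level `All` sends every value of `dom(D_s)` to the single value `all`. -/
theorem cube_slice_simulated (C : (ι → V) → Option M) (s : ι) (allv : V)
    (F : Multiset M → M) :
    StarSub s (SliceCube C s F)
      = nDeleteStar (AggrStar (ClimbStar (StarOf C) s (fun _ => allv)) F) s := by
  -- abbreviations
  set ρ : V → V := fun _ => allv with hρ
  have injG : ∀ (G H : StarGraphoid ι V M), G.edges = H.edges → G = H := by
    rintro ⟨g⟩ ⟨h⟩ h'
    exact congrArg StarGraphoid.mk h'
  apply injG
  -- the climbed edge multiset
  have hclimb : (ClimbStar (StarOf C) s ρ).edges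
      = (Finset.univ : Finset (ι → V)).val.filterMap
          (fun a => (C a).map (fun m => (climbSet s allv a, m))) := by
    simp only [ClimbStar, StarOf, Multiset.map_filterMap]
    congr 1
    funext a
    cases h : C a with
    | none => simp
    | some m =>
      simp only [Option.map_some]
      congr 2
      rw [targetSet, climbSet, Finset.image_image]
      rfl
  set E : Multiset (Finset (ι × V) × M) :=
    (Finset.univ : Finset (ι → V)).val.filterMap
      (fun a => (C a).map (fun m => (climbSet s allv a, m))) with hE
  have hfst : E.map Prod.fst
      = (Finset.univ : Finset (ι → V)).val.filterMap
          (fun a => (C a).map (fun _ => climbSet s allv a)) := by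
    rw [hE, Multiset.map_filterMap]
    congr 1
    funext a
    cases C a <;> simp
  -- measures of a group
  have hmeas : ∀ a₀ : ι → V,
      (E.filter (fun e => e.1 = climbSet s allv a₀)).map Prod.snd
        = (Finset.univ : Finset (ι → V)).val.filterMap
            (fun a => if (∀ i : {i : ι // i ≠ s}, a (i : ι) = restr s a₀ i)
              then C a else none) := by
    intro a₀
    rw [hE, Multiset.filter_filterMap, Multiset.map_filterMap]
    congr 1
    funext a
    have hcond : (∀ i : {i : ι // i ≠ s}, a (i : ι) = restr s a₀ i)
        ↔ climbSet s allv a = climbSet s allv a₀ := by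
      rw [climbSet_eq_iff]
      constructor
      · intro h; funext i; exact h i
      · intro h i; exact congrFun h i
    cases h : C a with
    | none => simp
    | some m =>
      by_cases hc : climbSet s allv a = climbSet s allv a₀
      · rw [if_pos (hcond.mpr hc)]
        simp [Option.filter, hc]
      · rw [if_neg (fun hh => hc (hcond.mp hh))]
        simp [Option.filter, hc]
  -- LHS edges
  have hL : (StarSub s (SliceCube C s F)).edges
      = (Finset.univ : Finset ({i : ι // i ≠ s} → V)).val.filterMap
          (fun a' => (SliceCube C s F a').map (fun m => (subSet s a', m))) := rfl
  -- RHS edges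
  have hR : (nDeleteStar (AggrStar (ClimbStar (StarOf C) s ρ) F) s).edges
      = ((E.map Prod.fst).toFinset.val).map
          (fun S => (S.filter (fun p => p.1 ≠ s),
            F ((E.filter (fun e => e.1 = S)).map Prod.snd))) := by
    simp only [nDeleteStar, AggrStar, hclimb, Multiset.map_map]
    rfl
  rw [hL, hR]
  -- membership in the group key finset
  have hkey : ∀ S : Finset (ι × V), S ∈ (E.map Prod.fst).toFinset
      ↔ ∃ a : ι → V, (∃ m, C a = some m) ∧ climbSet s allv a = S := by
    intro S
    rw [Multiset.mem_toFinset, hfst, Multiset.mem_filterMap]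
    constructor
    · rintro ⟨a, -, ha⟩
      rw [Option.map_eq_some_iff] at ha
      obtain ⟨m, hm, rfl⟩ := ha
      exact ⟨a, ⟨m, hm⟩, rfl⟩
    · rintro ⟨a, ⟨m, hm⟩, rfl⟩
      exact ⟨a, Finset.mem_univ_val _, by rw [hm]; rfl⟩
  -- slice unfolding
  have hslice : ∀ (a' : {i : ι // i ≠ s} → V) (m : M),
      SliceCube C s F a' = some m ↔
        ((Finset.univ : Finset (ι → V)).val.filterMap
          (fun a => if (∀ i : {i : ι // i ≠ s}, a (i : ι) = a' i) then C a else none) ≠ 0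
        ∧ F ((Finset.univ : Finset (ι → V)).val.filterMap
          (fun a => if (∀ i : {i : ι // i ≠ s}, a (i : ι) = a' i) then C a else none)) = m) := by
    intro a' m
    unfold SliceCube
    simp only []
    split
    · next h0 =>
      constructor
      · intro h; cases h
      · rintro ⟨hne, -⟩; exact absurd h0 hne
    · next h0 =>
      constructor
      · intro h; exact ⟨h0, Option.some.inj h⟩
      · rintro ⟨-, rfl⟩; rfl
  -- nodup of both sides
  have hnodL : ((Finset.univ : Finset ({i : ι // i ≠ s} → V)).val.filterMap
      (fun a' => (SliceCube C s F a').map (fun m => (subSet s a', m)))).Nodup := by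
    refine Multiset.Nodup.filterMap _ ?_ (Finset.univ.nodup)
    intro a' b' p hp hp'
    rw [Option.mem_def, Option.map_eq_some_iff] at hp hp'
    obtain ⟨m1, -, h1⟩ := hp
    obtain ⟨m2, -, h2⟩ := hp'
    have : subSet s a' = subSet s b' := by
      have e1 : p.1 = subSet s a' := by rw [← h1]
      have e2 : p.1 = subSet s b' := by rw [← h2]
      rw [← e1, e2]
    exact subSet_inj this
  have hnodR : (((E.map Prod.fst).toFinset.val).map
      (fun S => (S.filter (fun p => p.1 ≠ s),
        F ((E.filter (fun e => e.1 = S)).map Prod.snd)))).Nodup := by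
    refine Multiset.Nodup.map_on ?_ (E.map Prod.fst).toFinset.nodup
    intro S1 hS1 S2 hS2 hFS
    obtain ⟨a1, -, rfl⟩ := (hkey S1).mp hS1
    obtain ⟨a2, -, rfl⟩ := (hkey S2).mp hS2
    have hfil : (climbSet s allv a1).filter (fun p => p.1 ≠ s)
        = (climbSet s allv a2).filter (fun p => p.1 ≠ s) :=
      congrArg Prod.fst hFS
    rw [climbSet_filter, climbSet_filter] at hfil
    rw [climbSet_eq_iff]
    exact subSet_inj hfil
  rw [Multiset.Nodup.ext hnodL hnodR]
  rintro ⟨T, m⟩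
  rw [Multiset.mem_filterMap, Multiset.mem_map]
  constructor
  · rintro ⟨a', -, ha'⟩
    rw [Option.map_eq_some_iff] at ha'
    obtain ⟨m0, hm0, hpair⟩ := ha'
    obtain ⟨rfl, rfl⟩ : subSet s a' = T ∧ m0 = m := by
      constructor
      · exact congrArg Prod.fst hpair
      · exact congrArg Prod.snd hpair
    obtain ⟨hne, hFm⟩ := (hslice a' m0).mp hm0
    -- find a witness cell
    obtain ⟨x, hx⟩ := Multiset.exists_mem_of_ne_zero hne
    rw [Multiset.mem_filterMap] at hx
    obtain ⟨a, -, hxa⟩ := hx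
    have hcond : ∀ i : {i : ι // i ≠ s}, a (i : ι) = a' i := by
      by_contra hc
      rw [if_neg hc] at hxa
      exact Option.some_ne_none x hxa.symm
    rw [if_pos hcond] at hxa
    have hra : restr s a = a' := funext fun i => hcond i
    refine ⟨climbSet s allv a, (hkey _).mpr ⟨a, ⟨x, hxa⟩, rfl⟩, ?_⟩
    rw [Prod.mk.injEq]
    constructor
    · rw [climbSet_filter, hra]
    · rw [hmeas a, hra]
      exact hFm
  · rintro ⟨S, hS, hpair⟩
    obtain ⟨a, ⟨m0, hm0⟩, rfl⟩ := (hkey S).mp hS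
    rw [Prod.mk.injEq] at hpair
    obtain ⟨hT, hm⟩ := hpair
    refine ⟨restr s a, Finset.mem_univ_val _, ?_⟩
    have hne : (Finset.univ : Finset (ι → V)).val.filterMap
        (fun b => if (∀ i : {i : ι // i ≠ s}, b (i : ι) = restr s a i)
          then C b else none) ≠ 0 := by
      intro h0
      have : m0 ∈ (Finset.univ : Finset (ι → V)).val.filterMap
          (fun b => if (∀ i : {i : ι // i ≠ s}, b (i : ι) = restr s a i)
            then C b else none) := by
        rw [Multiset.mem_filterMap]
        refine ⟨a, Finset.mem_univ_val _, ?_⟩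
        rw [if_pos (show (∀ i : {i : ι // i ≠ s}, a (i : ι) = restr s a i) from fun i => rfl)]
        exact hm0
      rw [h0] at this
      exact absurd this (Multiset.notMem_zero _)
    have hsome : SliceCube C s F (restr s a) = some m := by
      rw [hslice]
      refine ⟨hne, ?_⟩
      rw [← hmeas a] at *
      rw [← hm]
    rw [hsome, Option.map_some]
    rw [climbSet_filter] at hT
    rw [hT]
end
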